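/- Let p be a prime, a > b ≥ 0 integers, and 0 < j < p with b*p ≥ j. Then C(a*p, b*p - j) ≡ b*C(a,b)*C(p,j) (mod p^2). -/

import Mathlib

open Finset

lemma lucas_dvd {p : ℕ} (hp : p.Prime) (a j : ℕ) (hj : j % p ≠ 0) :
    (p : ℕ) ∣ (a * p).choose j := by
  haveI : Fact p.Prime := ⟨hp⟩
  have h := Choose.choose_modEq_choose_mod_mul_choose_div_nat (n := a * p) (k := j) (p := p)
  rw [Nat.mul_mod_left] at h
  rw [Nat.choose_eq_zero_of_lt (by omega : (0:ℕ) < j % p)] at h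
  simpa [Nat.modEq_zero_iff_dvd] using h

noncomputable def rhs (p a m : ℕ) : ℤ :=
  if m % p = 0 then (a.choose (m / p) : ℤ)
  else ((m / p + 1 : ℕ) : ℤ) * (a.choose (m / p + 1) : ℤ) * (p.choose (m % p) : ℤ)

lemma rhs_eval0 {p m : ℕ} (a : ℕ) (h : m % p = 0) : rhs p a m = (a.choose (m / p) : ℤ) := by
  rw [rhs, if_pos h]

lemma rhs_eval1 {p m : ℕ} (a : ℕ) (h : m % p ≠ 0) :
    rhs p a m = ((m / p + 1 : ℕ) : ℤ) * (a.choose (m / p + 1) : ℤ) * (p.choose (m % p) : ℤ) := by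
  rw [rhs, if_neg h]

lemma key {p : ℕ} (hp : p.Prime) (a : ℕ) :
    ∀ m, ((a * p).choose m : ℤ) ≡ rhs p a m [ZMOD ((p : ℤ) ^ 2)] := by
  have hp0 : 0 < p := hp.pos
  induction a with
  | zero =>
    intro m
    rcases Nat.eq_zero_or_pos m with rfl | hm
    · simp [rhs]
    · have h1 : (0 * p).choose m = 0 := by
        rw [zero_mul]; exact Nat.choose_eq_zero_of_lt hm
      have h2 : rhs p 0 m = 0 := by
        unfold rhs
        split_ifs with h
        · rw [Nat.choose_eq_zero_of_lt
            (Nat.div_pos (Nat.le_of_dvd hm (Nat.dvd_of_mod_eq_zero h)) hp0)]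
          simp
        · rw [Nat.choose_eq_zero_of_lt (Nat.succ_pos (m / p))]
          simp
      rw [h1, h2]
      simp
  | succ a IH =>
    intro m
    set r := m % p with hr
    set q := m / p with hq
    have hrp : r < p := Nat.mod_lt _ hp0
    have hrm : r ≤ m := Nat.mod_le _ _
    have hmqr : m = p * q + r := (Nat.div_add_mod m p).symm
    set A : ℤ := rhs p a m with hA
    set B : ℤ := if r = 0 then 0 else ((p.choose r : ℤ)) * (a.choose q : ℤ) with hB
    set C : ℤ := rhs p a (m - p) with hC
    set g : ℕ → ℤ := fun i =>
      (if i = 0 then A else 0) + (if i = r then B else 0) + (if i = p then C else 0) with hg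
    have hvdm : (((a + 1) * p).choose m : ℤ)
        = ∑ ij ∈ antidiagonal m, ((p.choose ij.1 : ℤ) * ((a * p).choose ij.2 : ℤ)) := by
      have h' : (a + 1) * p = p + a * p := by ring
      rw [h', Nat.add_choose_eq]
      push_cast
      rfl
    have hterm : ∀ ij ∈ antidiagonal m,
        ((p : ℤ) ^ 2) ∣ ((p.choose ij.1 : ℤ) * ((a * p).choose ij.2 : ℤ) - g ij.1) := by
      rintro ⟨i, j⟩ hij
      rw [Finset.HasAntidiagonal.mem_antidiagonal] at hij
      simp only at hij ⊢
      rcases Nat.eq_zero_or_pos i with hi0 | hi0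
      · have hgv : g 0 = A := by
          simp only [hg]
          rw [if_true, if_neg hp0.ne]
          rcases eq_or_ne r 0 with h0 | h0
          · rw [if_pos h0.symm, hB, if_pos h0]; ring
          · rw [if_neg (Ne.symm h0)]; ring
        rw [hi0, hgv, (by omega : j = m), Nat.choose_zero_right]
        simpa using (IH m).symm.dvd
      rcases lt_trichotomy i p with hip | hieq | hip
      · have hpi : (p : ℤ) ∣ (p.choose i : ℤ) :=
          Int.natCast_dvd_natCast.mpr (hp.dvd_choose_self (by omega) hip)
        rcases eq_or_ne i r with hir | hir
        · have hr0 : r ≠ 0 := by omega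
          have hj : j = p * q := by omega
          have hgv : g i = (p.choose r : ℤ) * (a.choose q : ℤ) := by
            simp only [hg]
            rw [if_neg (by omega : ¬ i = 0), if_pos hir, if_neg (by omega : ¬ i = p),
              hB, if_neg hr0]
            ring
          have hdj : (p : ℤ) ∣ ((a * p).choose j : ℤ) - (a.choose q : ℤ) := by
            have h2 := (IH j).of_dvd (dvd_pow_self (p : ℤ) (by norm_num))
            have hrj : j % p = 0 := by rw [hj]; exact Nat.mul_mod_right p q
            have hqj : j / p = q := by rw [hj]; exact Nat.mul_div_cancel_left q hp0
            have h3 : rhs p a j = (a.choose q : ℤ) := by rw [rhs_eval0 a hrj, hqj]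
            rw [h3] at h2
            exact h2.symm.dvd
          rw [hgv, hir, ← mul_sub, sq]
          exact mul_dvd_mul (hir ▸ hpi) hdj
        · have hgv : g i = 0 := by
            simp only [hg]
            rw [if_neg (by omega : ¬ i = 0), if_neg hir, if_neg (by omega : ¬ i = p)]
            ring
          have hjm : j % p ≠ 0 := by
            intro h0
            obtain ⟨t, ht⟩ := Nat.dvd_of_mod_eq_zero h0
            have h1 : m = p * t + i := by omega
            have h2 : m % p = i % p := by rw [h1, Nat.mul_add_mod]
            rw [Nat.mod_eq_of_lt hip] at h2
            exact hir (by omega)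
          have hdj : (p : ℤ) ∣ ((a * p).choose j : ℤ) :=
            Int.natCast_dvd_natCast.mpr (lucas_dvd hp a j hjm)
          rw [hgv, sub_zero, sq]
          exact mul_dvd_mul hpi hdj
      · have hj : j = m - p := by omega
        have hgv : g p = C := by
          simp only [hg]
          rw [if_neg hp0.ne', if_neg (by omega : ¬ p = r), if_true]
          ring
        rw [hieq, hgv, Nat.choose_self, hj]
        simpa using (IH (m - p)).symm.dvd
      · have hgv : g i = 0 := by
          simp only [hg]
          rw [if_neg (by omega : ¬ i = 0), if_neg (by omega : ¬ i = r),
            if_neg (by omega : ¬ i = p)]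
          ring
        rw [hgv, Nat.choose_eq_zero_of_lt hip]
        simp
    have hsum : ∑ ij ∈ antidiagonal m, g ij.1
        = A + B + (if p ≤ m then C else 0) := by
      rw [Finset.Nat.sum_antidiagonal_eq_sum_range_succ_mk]
      simp only [hg]
      rw [Finset.sum_add_distrib, Finset.sum_add_distrib,
        Finset.sum_ite_eq' (Finset.range (m + 1)) 0 (fun _ => A),
        Finset.sum_ite_eq' (Finset.range (m + 1)) r (fun _ => B),
        Finset.sum_ite_eq' (Finset.range (m + 1)) p (fun _ => C)]
      simp [Finset.mem_range, Nat.lt_succ_iff, hrm]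
    have hmain : (((a + 1) * p).choose m : ℤ)
        ≡ A + B + (if p ≤ m then C else 0) [ZMOD ((p : ℤ) ^ 2)] := by
      rw [hvdm, ← hsum]
      refine (Int.ModEq.symm (Int.modEq_iff_dvd.mpr ?_))
      rw [← Finset.sum_sub_distrib]
      exact Finset.dvd_sum hterm
    have hfin : A + B + (if p ≤ m then C else 0) = rhs p (a + 1) m := by
      have hr' : m % p = r := hr.symm
      have hq' : m / p = q := hq.symm
      rcases eq_or_ne r 0 with h0 | h0
      · have hmp0 : m % p = 0 := by rw [hr']; exact h0
        have eB : B = 0 := by rw [hB, if_pos h0]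
        have eT : rhs p (a + 1) m = ((a + 1).choose q : ℤ) := by
          rw [rhs_eval0 _ hmp0, hq']
        have eA : A = (a.choose q : ℤ) := by rw [hA, rhs_eval0 _ hmp0, hq']
        rcases Nat.eq_zero_or_pos m with rfl | hm
        · rw [if_neg (by omega : ¬ p ≤ 0), eA, eB, eT]
          have hq0 : q = 0 := by rw [hq]; simp
          simp [hq0]
        · have hpm : p ≤ m := Nat.le_of_dvd hm (Nat.dvd_of_mod_eq_zero hmp0)
          have e1 : m - p + p = m := Nat.sub_add_cancel hpm
          have e2 : (m - p) % p = 0 := by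
            have := Nat.add_mod_right (m - p) p
            rw [e1] at this
            omega
          have e3 : (m - p) / p + 1 = q := by
            have := Nat.add_div_right (m - p) hp0
            rw [e1, hq'] at this
            omega
          obtain ⟨q', hqq⟩ : ∃ q', q = q' + 1 := ⟨(m - p) / p, by omega⟩
          have eC : C = (a.choose q' : ℤ) := by
            rw [hC, rhs_eval0 _ e2, (by omega : (m - p) / p = q')]
          rw [if_pos hpm, eA, eB, eC, eT, hqq, Nat.choose_succ_succ]
          push_cast [Nat.succ_eq_add_one]
          ring
      · have hmp0 : m % p ≠ 0 := by rw [hr']; exact h0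
        have eA : A = ((q + 1 : ℕ) : ℤ) * (a.choose (q + 1) : ℤ) * (p.choose r : ℤ) := by
          rw [hA, rhs_eval1 _ hmp0, hq', hr']
        have eB : B = (p.choose r : ℤ) * (a.choose q : ℤ) := by rw [hB, if_neg h0]
        have eT : rhs p (a + 1) m
            = ((q + 1 : ℕ) : ℤ) * ((a + 1).choose (q + 1) : ℤ) * (p.choose r : ℤ) := by
          rw [rhs_eval1 _ hmp0, hq', hr']
        rcases le_or_gt p m with hpm | hpm
        · have e1 : m - p + p = m := Nat.sub_add_cancel hpm
          have e2 : (m - p) % p = r := by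
            have := Nat.add_mod_right (m - p) p
            rw [e1, hr'] at this
            omega
          have e3 : (m - p) / p + 1 = q := by
            have := Nat.add_div_right (m - p) hp0
            rw [e1, hq'] at this
            omega
          obtain ⟨q', hqq⟩ : ∃ q', q = q' + 1 := ⟨(m - p) / p, by omega⟩
          have eC : C = ((q' + 1 : ℕ) : ℤ) * (a.choose (q' + 1) : ℤ) * (p.choose r : ℤ) := by
            rw [hC, rhs_eval1 _ (by omega : (m - p) % p ≠ 0),
              (by omega : (m - p) / p = q'), e2]
          rw [if_pos hpm, eA, eB, eC, eT, hqq, Nat.choose_succ_succ a (q' + 1)]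
          push_cast [Nat.succ_eq_add_one]
          ring
        · have hq0 : q = 0 := by rw [← hq']; exact Nat.div_eq_of_lt hpm
          rw [if_neg (by omega), eA, eB, eT, hq0]
          simp only [zero_add, Nat.choose_one_right, Nat.choose_zero_right]
          push_cast
          ring
    rw [← hfin]
    exact hmain

theorem stmt_8 (p : ℕ) (hp : p.Prime) (a b j : ℕ) (hab : b < a) (hj0 : 0 < j) (hjp : j < p)
    (hbp : j ≤ b * p) :
    (((a * p).choose (b * p - j) : ℤ))
      ≡ (b : ℤ) * (a.choose b) * (p.choose j) [ZMOD ((p : ℤ) ^ 2)] := by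
  have hp0 : 0 < p := hp.pos
  obtain ⟨c, rfl⟩ : ∃ c, b = c + 1 := by
    rcases b with _ | c
    · simp at hbp; omega
    · exact ⟨c, rfl⟩
  have hm : (c + 1) * p - j = p * c + (p - j) := by
    rw [add_mul, one_mul, mul_comm, Nat.add_sub_assoc hjp.le]
  have hmod : (p * c + (p - j)) % p = p - j := by
    rw [Nat.mul_add_mod, Nat.mod_eq_of_lt (by omega)]
  have hdiv : (p * c + (p - j)) / p = c := by
    rw [Nat.mul_add_div hp0, Nat.div_eq_of_lt (by omega), add_zero]
  have h := key hp a ((c + 1) * p - j)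
  have hrhs : rhs p a ((c + 1) * p - j)
      = ((c + 1 : ℕ) : ℤ) * (a.choose (c + 1) : ℤ) * (p.choose j : ℤ) := by
    rw [rhs, hm, hmod, hdiv, if_neg (by omega), Nat.choose_symm hjp.le]
  rw [hrhs] at h
  push_cast at h ⊢
  exact h
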